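/- Let K ⊆ ℝⁿ be a convex open set containing 0, ψ: ℝⁿ → ℝ ∪ {+∞} convex with ψ(0) < 0 and K ⊆ dom(ψ) ⊆ closure(K), and let p > 0. If functions ψ_ℓ with ψ_ℓ(0) < 0 converge pointwise to ψ on K, then I_p(ψ) ≤ liminf_{ℓ→∞} I_p(ψ_ℓ), where I_p(ψ) = (∫_{ℝⁿ} (ψ*(x))^{-(n+p)} dx)^{-1/p}. -/

import Mathlib

open MeasureTheory Filter
open scoped ENNReal RealInnerProductSpace

noncomputable section

abbrev En (n : ℕ) := EuclideanSpace ℝ (Fin n)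

/-- Legendre transform of an `EReal`-valued function: `ψ*(y) = sup_{x ∈ dom ψ} (⟨x,y⟩ - ψ x)`. -/
def legendre {n : ℕ} (ψ : En n → EReal) (y : En n) : EReal :=
  ⨆ x : {x : En n // ψ x < ⊤}, ((⟪x.1, y⟫ : ℝ) : EReal) - ψ x.1

/-- Convexity for `ℝ ∪ {+∞}`-valued functions. -/
def EConvexOn {n : ℕ} (ψ : En n → EReal) : Prop :=
  ∀ x y : En n, ∀ a b : ℝ, 0 ≤ a → 0 ≤ b → a + b = 1 →
    ψ (a • x + b • y) ≤ (a : EReal) * ψ x + (b : EReal) * ψ y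

/-- `t ^ (-s)` with the conventions `0^(-s) = ∞`, `∞^(-s) = 0` (for `s > 0`). -/
def negPow (t : EReal) (s : ℝ) : ℝ≥0∞ :=
  if t = ⊤ then 0 else if t ≤ 0 then ⊤ else ENNReal.ofReal (t.toReal ^ (-s))

/-- `I_p(ψ) = (∫ (ψ*)^{-(n+p)})^{-1/p} ∈ [0,∞]`. -/
def Ip (n : ℕ) (p : ℝ) (ψ : En n → EReal) : ℝ≥0∞ :=
  (∫⁻ x, negPow (legendre ψ x) ((n : ℝ) + p)) ^ (-(1 : ℝ) / p)

namespace Aux4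

/-- Map `EReal → ℝ≥0∞` collapsing `(-∞,0]` to `0`. -/
def toE (t : EReal) : ℝ≥0∞ := if t = ⊤ then ⊤ else ENNReal.ofReal t.toReal

lemma toE_mono : Monotone toE := by
  intro a b hab
  unfold toE
  rcases eq_or_ne b ⊤ with rfl | hb
  · simp
  · have ha : a ≠ ⊤ := fun h => hb (top_le_iff.mp (h ▸ hab))
    rw [if_neg ha, if_neg hb]
    rcases eq_or_ne a ⊥ with rfl | ha'
    · simp
    · exact ENNReal.ofReal_le_ofReal (EReal.toReal_le_toReal hab ha' hb)

lemma negPow_eq (t : EReal) {s : ℝ} (hs : 0 < s) : negPow t s = (toE t) ^ (-s) := by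
  unfold negPow toE
  rcases eq_or_ne t ⊤ with rfl | ht
  · simp [ENNReal.top_rpow_of_neg (by linarith : -s < 0)]
  · rw [if_neg ht, if_neg ht]
    by_cases hle : t ≤ 0
    · rw [if_pos hle]
      have h1 : ENNReal.ofReal t.toReal = 0 := by
        rw [ENNReal.ofReal_eq_zero]
        rcases eq_or_ne t ⊥ with rfl | hbot
        · simp
        · calc t.toReal ≤ (0 : EReal).toReal := EReal.toReal_le_toReal hle hbot (by simp)
            _ = 0 := by simp
      rw [h1, ENNReal.zero_rpow_of_neg (by linarith)]
    · rw [if_neg hle]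
      have h0 : (0 : EReal) < t := lt_of_not_ge hle
      have hbot : t ≠ ⊥ := fun h => by simp [h] at h0
      have htr : 0 < t.toReal := by
        have := EReal.coe_toReal ht hbot
        rw [← EReal.coe_pos, this]; exact h0
      rw [ENNReal.ofReal_rpow_of_pos htr]

lemma rpow_neg_antitone {q : ℝ} (hq : 0 < q) : Antitone (fun x : ℝ≥0∞ => x ^ (-q)) := by
  intro a b hab
  simp only [ENNReal.rpow_neg]
  exact ENNReal.inv_le_inv.mpr (ENNReal.rpow_le_rpow hab hq.le)

lemma negPow_antitone {s : ℝ} (hs : 0 < s) : Antitone (negPow · s) := by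
  intro a b hab
  simp only [negPow_eq _ hs]
  exact rpow_neg_antitone hs (toE_mono hab)

lemma toE_continuousAt {t : EReal} (ht : t ≠ ⊥) : ContinuousAt toE t := by
  rcases eq_or_ne t ⊤ with rfl | htop
  · rw [ContinuousAt]
    have : toE ⊤ = ⊤ := by simp [toE]
    rw [this, ENNReal.tendsto_nhds_top_iff_nnreal]
    intro x
    have hmem : Set.Ioi (((x : ℝ) + 1 : ℝ) : EReal) ∈ nhds (⊤ : EReal) :=
      Ioi_mem_nhds (EReal.coe_lt_top _)
    filter_upwards [hmem] with u hu
    rcases eq_or_ne u ⊤ with rfl | hu'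
    · simpa [toE] using ENNReal.coe_lt_top
    · have hub : u ≠ ⊥ := ne_bot_of_gt hu
      have h1 : ((x : ℝ) + 1 : ℝ) < u.toReal := by
        rw [← EReal.coe_lt_coe_iff, EReal.coe_toReal hu' hub]
        exact hu
      have : toE u = ENNReal.ofReal u.toReal := by simp [toE, hu']
      rw [this]
      calc (x : ℝ≥0∞) = ENNReal.ofReal (x : ℝ) := (ENNReal.ofReal_coe_nnreal).symm
        _ < ENNReal.ofReal u.toReal := by
            rw [ENNReal.ofReal_lt_ofReal_iff (lt_of_le_of_lt (by positivity) h1)]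
            linarith
  · lift t to ℝ using ⟨htop, ht⟩
    have hev : toE =ᶠ[nhds (t : EReal)] (fun u => ENNReal.ofReal u.toReal) := by
      filter_upwards [Iio_mem_nhds (EReal.coe_lt_top t)] with u hu
      exact if_neg (ne_top_of_lt hu)
    apply ContinuousAt.congr _ hev.symm
    exact ENNReal.continuous_ofReal.continuousAt.comp
      (EReal.tendsto_toReal (by simp) (by simp))

lemma toE_measurable : Measurable toE := by
  unfold toE
  apply Measurable.ite
  · exact MeasurableSet.singleton _ -- {t | t = ⊤}?
  · exact measurable_const
  · exact ENNReal.measurable_ofReal.comp measurable_ereal_toReal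

lemma negPow_measurable {s : ℝ} (hs : 0 < s) : Measurable (negPow · s) := by
  simp only [negPow_eq _ hs]
  exact (toE_measurable).pow_const _

lemma legendre_measurable {n : ℕ} (ψ : En n → EReal) : Measurable (legendre ψ) := by
  have h : LowerSemicontinuous (legendre ψ) := by
    apply lowerSemicontinuous_iSup
    intro x
    apply Continuous.lowerSemicontinuous
    rcases eq_or_ne (ψ x.1) ⊥ with h | h
    · have : (fun y : En n => ((⟪x.1, y⟫ : ℝ) : EReal) - ψ x.1) = fun _ => ⊤ := by
        funext y; rw [h, EReal.coe_sub_bot]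
      rw [this]; exact continuous_const
    · have hx := x.2.ne
      have : (fun y : En n => ((⟪x.1, y⟫ : ℝ) : EReal) - ψ x.1)
          = fun y : En n => (((⟪x.1, y⟫ : ℝ) - (ψ x.1).toReal : ℝ) : EReal) := by
        funext y
        rw [EReal.coe_sub, EReal.coe_toReal hx h]
      rw [this]
      exact continuous_coe_real_ereal.comp
        (((continuous_const.inner continuous_id).sub continuous_const))
  exact h.measurable

end Aux4

namespace Aux4

lemma tendsto_const_sub (c : ℝ) {α : Type*} {l : Filter α} {f : α → EReal} {a : EReal}
    (h : Tendsto f l (nhds a)) :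
    Tendsto (fun b => (c : EReal) - f b) l (nhds ((c : EReal) - a)) := by
  have hneg : Tendsto (fun b => -f b) l (nhds (-a)) :=
    (continuous_neg.tendsto a).comp h
  have hadd : ContinuousAt (fun p : EReal × EReal => p.1 + p.2) ((c : EReal), -a) :=
    EReal.continuousAt_add (Or.inl (by simp)) (Or.inl (by simp))
  have := hadd.tendsto.comp (tendsto_const_nhds.prodMk_nhds hneg)
  simpa [sub_eq_add_neg, Function.comp_def] using this

lemma key1 {n : ℕ} {K : Set (En n)} (hKconv : Convex ℝ K) (hKopen : IsOpen K)
    (h0K : (0 : En n) ∈ K) {ψ : En n → EReal} (hconv : EConvexOn ψ) (hψ0 : ψ 0 < 0)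
    (hdom₁ : K ⊆ {x | ψ x < ⊤}) (hdom₂ : {x | ψ x < ⊤} ⊆ closure K)
    {ψs : ℕ → En n → EReal}
    (hptwise : ∀ x ∈ K, Tendsto (fun ℓ => ψs ℓ x) atTop (nhds (ψ x)))
    (y : En n) :
    legendre ψ y ≤ atTop.liminf (fun ℓ => legendre (ψs ℓ) y) := by
  set L := atTop.liminf (fun ℓ => legendre (ψs ℓ) y) with hLdef
  have hterm : ∀ z ∈ K, ((⟪z, y⟫ : ℝ) : EReal) - ψ z ≤ L := by
    intro z hz
    have htd : Tendsto (fun ℓ => ((⟪z, y⟫ : ℝ) : EReal) - ψs ℓ z) atTop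
        (nhds (((⟪z, y⟫ : ℝ) : EReal) - ψ z)) := tendsto_const_sub _ (hptwise z hz)
    have hle : ∀ᶠ ℓ in atTop, ((⟪z, y⟫ : ℝ) : EReal) - ψs ℓ z ≤ legendre (ψs ℓ) y := by
      have hev : ∀ᶠ ℓ in atTop, ψs ℓ z < ⊤ :=
        (hptwise z hz).eventually_lt_const (hdom₁ hz)
      filter_upwards [hev] with ℓ hℓ
      exact le_iSup (fun x : {x // ψs ℓ x < ⊤} =>
        ((⟪x.1, y⟫ : ℝ) : EReal) - ψs ℓ x.1) ⟨z, hℓ⟩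
    calc ((⟪z, y⟫ : ℝ) : EReal) - ψ z
        = atTop.liminf (fun ℓ => ((⟪z, y⟫ : ℝ) : EReal) - ψs ℓ z) := htd.liminf_eq.symm
      _ ≤ L := liminf_le_liminf hle
  apply iSup_le
  rintro ⟨x, hx⟩
  show ((⟪x, y⟫ : ℝ) : EReal) - ψ x ≤ L
  have hK' : ∀ t : ℝ, 0 < t → t < 1 → (t • x) ∈ K := by
    intro t ht ht1
    have := hKconv.combo_interior_closure_mem_interior (x := 0) (y := x)
      (by rw [hKopen.interior_eq]; exact h0K) (hdom₂ hx)
      (by linarith : (0:ℝ) < 1 - t) ht.le (by ring)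
    rw [hKopen.interior_eq] at this
    simpa using this
  rcases eq_or_ne (ψ x) ⊥ with hxb | hxb
  · have hhalf : ψ ((1/2 : ℝ) • x) = ⊥ := by
      have h := hconv x 0 (1/2) (1/2) (by norm_num) (by norm_num) (by norm_num)
      rw [smul_zero, add_zero, hxb,
        EReal.coe_mul_bot_of_pos (by norm_num : (0:ℝ) < 1/2), EReal.bot_add] at h
      exact le_bot_iff.mp h
    have h := hterm _ (hK' (1/2) (by norm_num) (by norm_num))
    rw [hhalf, EReal.coe_sub_bot] at h
    exact le_trans le_top h
  · rcases eq_or_ne (ψ 0) ⊥ with h0b | h0b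
    · have hhalf : ψ ((1/2 : ℝ) • x) = ⊥ := by
        have h := hconv x 0 (1/2) (1/2) (by norm_num) (by norm_num) (by norm_num)
        rw [smul_zero, add_zero, h0b,
          EReal.coe_mul_bot_of_pos (by norm_num : (0:ℝ) < 1/2), EReal.add_bot] at h
        exact le_bot_iff.mp h
      have h := hterm _ (hK' (1/2) (by norm_num) (by norm_num))
      rw [hhalf, EReal.coe_sub_bot] at h
      exact le_trans le_top h
    · set cx : ℝ := (ψ x).toReal with hcx
      set c0 : ℝ := (ψ 0).toReal with hc0
      have hψx : ψ x = (cx : EReal) := (EReal.coe_toReal hx.ne hxb).symm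
      have hψ0' : ψ 0 = (c0 : EReal) := (EReal.coe_toReal (hψ0.trans_le le_top).ne h0b).symm
      set A : ℝ := ⟪x, y⟫ with hA
      have hfle : ∀ k : ℕ,
          ((( (1 - 1/((k:ℝ)+2)) * A - ((1/((k:ℝ)+2)) * c0 + (1 - 1/((k:ℝ)+2)) * cx) : ℝ)) : EReal) ≤ L := by
        intro k
        set t : ℝ := 1 - 1/((k:ℝ)+2) with htdef
        have hk2 : (0:ℝ) < (k:ℝ) + 2 := by positivity
        have ht0 : 0 < t := by
          rw [htdef]
          have : 1/((k:ℝ)+2) ≤ 1/2 := by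
            apply div_le_div_of_nonneg_left <;> [skip; norm_num; skip] <;> linarith
          linarith
        have ht1 : t < 1 := by
          rw [htdef]
          have : 0 < 1/((k:ℝ)+2) := by positivity
          linarith
        have hmem := hK' t ht0 ht1
        have hconvx := hconv x 0 t (1 - t) ht0.le (by linarith) (by ring)
        rw [smul_zero, add_zero, hψx, hψ0', ← EReal.coe_mul, ← EReal.coe_mul,
          ← EReal.coe_add] at hconvx
        have hterm' := hterm _ hmem
        have hrw : (1:ℝ)/((k:ℝ)+2) = 1 - t := by rw [htdef]; ring
        rw [hrw]
        have hinner : ⟪(t • x : En n), y⟫ = t * A := real_inner_smul_left x y t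
        calc (((t * A - ((1-t) * c0 + t * cx) : ℝ)) : EReal)
            = ((t * A : ℝ) : EReal) - (((1-t) * c0 + t * cx  : ℝ) : EReal) := EReal.coe_sub _ _
          _ = ((t * A : ℝ) : EReal) - ((t * cx + (1-t) * c0  : ℝ) : EReal) := by ring_nf
          _ ≤ ((t * A : ℝ) : EReal) - ψ (t • x) := EReal.sub_le_sub (le_refl _) hconvx
          _ = ((⟪(t • x : En n), y⟫ : ℝ) : EReal) - ψ (t • x) := by rw [hinner]
          _ ≤ L := hterm' 
      have hreal : Tendsto (fun k : ℕ => ((1 - 1/((k:ℝ)+2)) * A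
          - ((1/((k:ℝ)+2)) * c0 + (1 - 1/((k:ℝ)+2)) * cx))) atTop (nhds (A - cx)) := by
        have h1 : Tendsto (fun k : ℕ => 1/((k:ℝ)+2)) atTop (nhds 0) := by
          simp only [one_div]
          exact tendsto_inv_atTop_zero.comp
            (tendsto_atTop_add_const_right atTop 2 tendsto_natCast_atTop_atTop)
        have hg : Continuous (fun u : ℝ => (1 - u) * A - (u * c0 + (1 - u) * cx)) := by
          fun_prop
        have := (hg.tendsto 0).comp h1
        simpa [Function.comp_def] using this
      have htd : Tendsto (fun k : ℕ => ((((1 - 1/((k:ℝ)+2)) * A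
          - ((1/((k:ℝ)+2)) * c0 + (1 - 1/((k:ℝ)+2)) * cx) : ℝ)) : EReal)) atTop
          (nhds (((A - cx : ℝ)) : EReal)) :=
        (continuous_coe_real_ereal.tendsto _).comp hreal
      have hfin : ((A - cx : ℝ) : EReal) ≤ L := le_of_tendsto htd (Eventually.of_forall hfle)
      rw [hψx]
      calc ((A : ℝ) : EReal) - (cx : EReal) = ((A - cx : ℝ) : EReal) := (EReal.coe_sub _ _).symm
        _ ≤ L := hfin

lemma key2 {s : ℝ} (hs : 0 < s) {a : ℕ → EReal} {b : EReal} (hb : 0 < b)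
    (h : b ≤ atTop.liminf a) :
    atTop.limsup (fun ℓ => negPow (a ℓ) s) ≤ negPow b s := by
  have hbot : atTop.liminf a ≠ ⊥ := ne_bot_of_gt (lt_of_lt_of_le hb h)
  have heq : (fun t => negPow t s) = fun t => (toE t) ^ (-s) :=
    funext fun t => negPow_eq t hs
  have hcont : ContinuousAt (fun t => negPow t s) (atTop.liminf a) := by
    rw [heq]
    exact (ENNReal.continuous_rpow_const.continuousAt).comp (toE_continuousAt hbot)
  have hmap := (negPow_antitone hs).map_liminf_of_continuousAt a hcont
  calc atTop.limsup (fun ℓ => negPow (a ℓ) s)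
      = negPow (atTop.liminf a) s := hmap.symm
    _ ≤ negPow b s := negPow_antitone hs h

lemma exists_coord {n : ℕ} (y : En n) (hy : 0 < ‖y‖) :
    ∃ i : Fin n, ‖y‖ ≤ Real.sqrt n * |y i| := by
  by_contra hcon
  push_neg at hcon
  have hn : 0 < n := by
    rcases Nat.eq_zero_or_pos n with h | h
    · subst h
      have : y = 0 := Subsingleton.elim y 0
      rw [this] at hy; simp at hy
    · exact h
  have hsqn : (0:ℝ) < Real.sqrt n := Real.sqrt_pos.mpr (by exact_mod_cast hn)
  have hsum : ‖y‖^2 = ∑ i, (y i)^2 := by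
    rw [EuclideanSpace.norm_eq, Real.sq_sqrt (by positivity)]
    congr 1
    funext i
    rw [Real.norm_eq_abs, sq_abs]
  have hlt : ∀ i ∈ Finset.univ, (y i)^2 < ‖y‖^2 / n := by
    intro i _
    have h1 : |y i| < ‖y‖ / Real.sqrt n := by
      rw [lt_div_iff₀ hsqn]
      calc |y i| * Real.sqrt n = Real.sqrt n * |y i| := by ring
        _ < ‖y‖ := hcon i
    have h2 : (y i)^2 < (‖y‖ / Real.sqrt n)^2 := by
      rw [← sq_abs]
      exact pow_lt_pow_left₀ h1 (abs_nonneg _) two_ne_zero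
    calc (y i)^2 < (‖y‖ / Real.sqrt n)^2 := h2
      _ = ‖y‖^2 / n := by rw [div_pow, Real.sq_sqrt (by positivity : (0:ℝ) ≤ (n:ℝ))]
  have hne : (Finset.univ : Finset (Fin n)).Nonempty := ⟨⟨0, hn⟩, Finset.mem_univ _⟩
  have := Finset.sum_lt_sum_of_nonempty hne hlt
  rw [← hsum, Finset.sum_const, Finset.card_univ, Fintype.card_fin, nsmul_eq_mul] at this
  rw [mul_div_cancel₀] at this
  · exact lt_irrefl _ this
  · exact_mod_cast hn.ne'

end Aux4

set_option maxHeartbeats 1000000 in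
theorem statement4 {n : ℕ} (p : ℝ) (hp : 0 < p)
    (K : Set (En n)) (hKconv : Convex ℝ K) (hKopen : IsOpen K)
    (h0K : (0 : En n) ∈ K) (ψ : En n → EReal) (hconv : EConvexOn ψ) (hψ0 : ψ 0 < 0)
    (hdom₁ : K ⊆ {x | ψ x < ⊤}) (hdom₂ : {x | ψ x < ⊤} ⊆ closure K)
    (ψs : ℕ → En n → EReal) (hs0 : ∀ ℓ, ψs ℓ 0 < 0)
    (hptwise : ∀ x ∈ K, Tendsto (fun ℓ => ψs ℓ x) atTop (nhds (ψ x))) :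
    Ip n p ψ ≤ atTop.liminf (fun ℓ => Ip n p (ψs ℓ)) := by
  classical
  set s : ℝ := (n : ℝ) + p with hsdef
  have hs : (0:ℝ) < s := by positivity
  set J : (En n → EReal) → ℝ≥0∞ := fun φ => ∫⁻ x, negPow (legendre φ x) s with hJ
  have key1 : ∀ y, legendre ψ y ≤ atTop.liminf (fun ℓ => legendre (ψs ℓ) y) :=
    Aux4.key1 hKconv hKopen h0K hconv hψ0 hdom₁ hdom₂ hptwise
  have hpos : ∀ y, (0:EReal) < legendre ψ y := by
    intro y
    obtain ⟨b, hb1, hb2⟩ := EReal.exists_between_coe_real hψ0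
    have hbneg : b < 0 := EReal.coe_neg'.mp hb2
    have h0dom : ψ 0 < ⊤ := hψ0.trans_le le_top
    have hle := le_iSup (fun x : {x // ψ x < ⊤} =>
      ((⟪x.1, y⟫ : ℝ) : EReal) - ψ x.1) ⟨0, h0dom⟩
    simp only [inner_zero_left, EReal.coe_zero] at hle
    have h2 : ((-b : ℝ) : EReal) ≤ (0:EReal) - ψ 0 := by
      calc ((-b:ℝ):EReal) = ((0 - b:ℝ):EReal) := by norm_num
        _ = ((0:ℝ):EReal) - ((b:ℝ):EReal) := EReal.coe_sub _ _
        _ ≤ (0:EReal) - ψ 0 := EReal.sub_le_sub (by norm_num) hb1.le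
    refine lt_of_lt_of_le ?_ (h2.trans hle)
    exact EReal.coe_pos.mpr (by linarith)
  have key2 : ∀ y, atTop.limsup (fun ℓ => negPow (legendre (ψs ℓ) y) s)
      ≤ negPow (legendre ψ y) s :=
    fun y => Aux4.key2 hs (hpos y) (key1 y)
  -- domination
  obtain ⟨ε, hε, hball⟩ := Metric.isOpen_iff.mp hKopen 0 h0K
  set r : ℝ := ε/2 with hrdef
  have hrpos : 0 < r := by positivity
  have hclos : Metric.closedBall (0 : En n) r ⊆ K :=
    (Metric.closedBall_subset_ball (by rw [hrdef]; linarith)).trans hball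
  set pts : Fin n × Bool → En n :=
    fun q => (if q.2 then r else -r) • EuclideanSpace.single q.1 (1:ℝ) with hpts
  have hptsK : ∀ q, pts q ∈ K := by
    intro q
    apply hclos
    rw [Metric.mem_closedBall, dist_zero_right, hpts]
    have : ‖EuclideanSpace.single q.1 (1:ℝ)‖ = 1 := by
      rw [EuclideanSpace.norm_single]; norm_num
    rw [norm_smul, this, mul_one]
    rcases q.2 with _ | _ <;> simp [abs_of_pos hrpos, abs_of_neg (neg_neg_iff_pos.mpr hrpos)]
  have hMq : ∀ q, ∃ Mq : ℝ, ψ (pts q) < (Mq : EReal) := by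
    intro q
    obtain ⟨m, hm1, _⟩ := EReal.exists_between_coe_real (hdom₁ (hptsK q))
    exact ⟨m, hm1⟩
  choose Mf hMf using hMq
  set M : ℝ := max 0 (⨆ q, Mf q) with hMdef
  have hM0 : 0 ≤ M := le_max_left _ _
  have hMbig : ∀ q, ψ (pts q) < (M:EReal) := by
    intro q
    refine (hMf q).trans_le ?_
    rw [EReal.coe_le_coe_iff]
    exact (le_ciSup (Set.Finite.bddAbove (Set.finite_range Mf)) q).trans (le_max_right _ _)
  obtain ⟨b, hb1, hb2⟩ := EReal.exists_between_coe_real hψ0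
  set c' : ℝ := -b with hc'def
  have hc'pos : 0 < c' := by
    have : b < 0 := EReal.coe_neg'.mp hb2
    rw [hc'def]; linarith
  have hbc : ψ 0 < ((-c' : ℝ) : EReal) := by
    rw [hc'def, neg_neg]; exact hb1
  have hE1 : ∀ᶠ ℓ in atTop, ψs ℓ 0 < ((-c':ℝ):EReal) :=
    (hptwise 0 h0K).eventually_lt_const hbc
  have hE2 : ∀ᶠ ℓ in atTop, ∀ q, ψs ℓ (pts q) < ((M:ℝ):EReal) := by
    rw [eventually_all]
    exact fun q => (hptwise (pts q) (hptsK q)).eventually_lt_const (hMbig q)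
  obtain ⟨N, hN⟩ := eventually_atTop.mp (hE1.and hE2)
  set a : ℝ := r / (Real.sqrt n + 1) with hadef
  have hsqrtn : (0:ℝ) ≤ Real.sqrt n := Real.sqrt_nonneg _
  have hapos : 0 < a := div_pos hrpos (by linarith)
  have hlow : ∀ ℓ, N ≤ ℓ → ∀ y : En n,
      ((max c' (a * ‖y‖ - M) : ℝ) : EReal) ≤ legendre (ψs ℓ) y := by
    intro ℓ hℓ y
    obtain ⟨h1, h2⟩ := hN ℓ hℓ
    rcases le_total (a * ‖y‖ - M) c' with hmax | hmax
    · rw [max_eq_left hmax]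
      have h0top : ψs ℓ 0 < ⊤ := (hs0 ℓ).trans_le le_top
      have hle := le_iSup (fun x : {x // ψs ℓ x < ⊤} =>
        ((⟪x.1, y⟫ : ℝ) : EReal) - ψs ℓ x.1) ⟨0, h0top⟩
      simp only [inner_zero_left, EReal.coe_zero] at hle
      refine le_trans ?_ hle
      calc ((c':ℝ):EReal) = ((0 - -c' :ℝ):EReal) := by norm_num
        _ = ((0:ℝ):EReal) - ((-c':ℝ):EReal) := EReal.coe_sub _ _
        _ ≤ (0:EReal) - ψs ℓ 0 := EReal.sub_le_sub (by norm_num) h1.le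
    · rw [max_eq_right hmax]
      have hy : 0 < ‖y‖ := by
        rcases eq_or_lt_of_le (norm_nonneg y) with h | h
        · exfalso
          rw [← h] at hmax
          simp only [mul_zero, zero_sub] at hmax
          nlinarith
        · exact h
      obtain ⟨i, hi⟩ := Aux4.exists_coord y hy
      have hpq : ∀ b : Bool, ⟪pts (i, b), y⟫ = (if b then r else -r) * y i := by
        intro b
        rw [hpts]
        cases b <;>
          simp [real_inner_smul_left, EuclideanSpace.inner_single_left]
      obtain ⟨q, hq⟩ : ∃ q : Fin n × Bool, ⟪pts q, y⟫ = r * |y i| := by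
        rcases le_or_gt 0 (y i) with h | h
        · refine ⟨(i, true), ?_⟩
          rw [hpq true, abs_of_nonneg h]
          simp
        · refine ⟨(i, false), ?_⟩
          rw [hpq false, abs_of_neg h]
          simp
      have hinner : a * ‖y‖ ≤ ⟪pts q, y⟫ := by
        rw [hq]
        have h3 : ‖y‖ ≤ (Real.sqrt n + 1) * |y i| :=
          le_trans hi (by nlinarith [abs_nonneg (y i)])
        rw [hadef, div_mul_eq_mul_div, div_le_iff₀ (by linarith)]
        nlinarith [hrpos]
      have hqtop : ψs ℓ (pts q) < ⊤ := (h2 q).trans_le le_top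
      have hle := le_iSup (fun x : {x // ψs ℓ x < ⊤} =>
        ((⟪x.1, y⟫ : ℝ) : EReal) - ψs ℓ x.1) ⟨pts q, hqtop⟩
      refine le_trans ?_ hle
      calc ((a * ‖y‖ - M : ℝ) : EReal) ≤ ((⟪pts q, y⟫ - M : ℝ) : EReal) := by
            rw [EReal.coe_le_coe_iff]; linarith
        _ = ((⟪pts q, y⟫:ℝ):EReal) - ((M:ℝ):EReal) := EReal.coe_sub _ _
        _ ≤ ((⟪pts q, y⟫:ℝ):EReal) - ψs ℓ (pts q) :=
            EReal.sub_le_sub (le_refl _) (h2 q).le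
  set g : En n → ℝ≥0∞ := fun y => ENNReal.ofReal ((max c' (a * ‖y‖ - M)) ^ (-s)) with hgdef
  have hgbound : ∀ ℓ, N ≤ ℓ → ∀ y, negPow (legendre (ψs ℓ) y) s ≤ g y := by
    intro ℓ hℓ y
    refine le_trans (Aux4.negPow_antitone hs (hlow ℓ hℓ y)) (le_of_eq ?_)
    have hmaxpos : 0 < max c' (a*‖y‖-M) := lt_of_lt_of_le hc'pos (le_max_left _ _)
    simp only [negPow]
    rw [if_neg (EReal.coe_ne_top _), if_neg (not_le.mpr (EReal.coe_pos.mpr hmaxpos)),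
      EReal.toReal_coe]
  have hgfin : (∫⁻ y, g y) ≠ ⊤ := by
    set R : ℝ := (2*M + a)/a with hRdef
    have hRpos : 0 < R := div_pos (by nlinarith) hapos
    set δ : ℝ := min (a/2) (c'/(1+R)) with hδdef
    have hδpos : 0 < δ := lt_min (by linarith) (div_pos hc'pos (by linarith))
    have hptb : ∀ y : En n, g y ≤ ENNReal.ofReal (δ^(-s) * (1+‖y‖)^(-s)) := by
      intro y
      rw [hgdef]
      apply ENNReal.ofReal_le_ofReal
      have hkey : δ * (1 + ‖y‖) ≤ max c' (a*‖y‖ - M) := by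
        rcases le_total ‖y‖ R with hcase | hcase
        · refine le_trans ?_ (le_max_left _ _)
          have hd : δ ≤ c'/(1+R) := min_le_right _ _
          calc δ * (1+‖y‖) ≤ (c'/(1+R)) * (1+R) := by
                apply mul_le_mul hd (by linarith) (by positivity) (by positivity)
            _ = c' := by field_simp
        · refine le_trans ?_ (le_max_right _ _)
          have hd : δ ≤ a/2 := min_le_left _ _
          have h3 : (a/2)*R = M + a/2 := by rw [hRdef]; field_simp
          nlinarith [norm_nonneg y]
      calc (max c' (a*‖y‖-M))^(-s) ≤ (δ*(1+‖y‖))^(-s) :=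
            Real.rpow_le_rpow_of_nonpos (by positivity) hkey (by linarith)
        _ = δ^(-s) * (1+‖y‖)^(-s) :=
            Real.mul_rpow hδpos.le (by positivity)
    have hfr : ((Module.finrank ℝ (En n) : ℝ)) < s := by
      rw [finrank_euclideanSpace_fin, hsdef]; push_cast; linarith
    have hint : Integrable (fun y : En n => δ^(-s) * (1+‖y‖)^(-s)) :=
      (integrable_one_add_norm hfr).const_mul _
    have := hint.lintegral_lt_top
    exact (lt_of_le_of_lt (lintegral_mono hptb) this).ne
  have key4 : atTop.limsup (fun ℓ => J (ψs ℓ)) ≤ J ψ := by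
    rw [← limsup_nat_add (fun ℓ => J (ψs ℓ)) N]
    calc atTop.limsup (fun ℓ => ∫⁻ y, negPow (legendre (ψs (ℓ+N)) y) s)
        ≤ ∫⁻ y, atTop.limsup (fun ℓ => negPow (legendre (ψs (ℓ+N)) y) s) := by
          apply limsup_lintegral_le g
          · intro ℓ
            exact (Aux4.negPow_measurable hs).comp (Aux4.legendre_measurable _)
          · intro ℓ
            exact Eventually.of_forall (hgbound (ℓ+N) (Nat.le_add_left N ℓ))
          · exact hgfin
      _ ≤ ∫⁻ y, negPow (legendre ψ y) s := by
          apply lintegral_mono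
          intro y
          have hsh := limsup_nat_add (fun ℓ => negPow (legendre (ψs ℓ) y) s) N
          exact hsh.le.trans (key2 y)
      _ = J ψ := rfl
  have hanti : Antitone (fun x : ℝ≥0∞ => x ^ (-(1:ℝ)/p)) := by
    have he : (-(1:ℝ)/p) = -(1/p) := by ring
    rw [he]
    exact Aux4.rpow_neg_antitone (by positivity)
  have hmap := hanti.map_limsup_of_continuousAt (F := atTop) (fun ℓ => J (ψs ℓ))
      (ENNReal.continuous_rpow_const.continuousAt)
  have hfinal : Ip n p ψ ≤ (atTop.limsup (fun ℓ => J (ψs ℓ))) ^ (-(1:ℝ)/p) := hanti key4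
  rw [hmap] at hfinal
  exact hfinal
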